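/- Let A ∈ ℝ^{m×n}, b ∈ ℝ^m, μ > 0, β ∈ [0,1], and α > 0. Define the elastic net objective g(x) = (1/2)‖Ax − b‖₂² + μ((1−β)/2 ‖x‖₂² + β‖x‖₁) and the ISTA map f(x) = S_{αμβ}(x − α(Aᵀ(Ax − b) + μ(1−β)x)). Then a point x⋆ ∈ ℝⁿ satisfies f(x⋆) = x⋆ if and only if x⋆ is a global minimizer of g. -/

import Mathlib

open Matrix

/-- Interpret a plain vector in `Fin k → ℝ` as a point of Euclidean space. -/
noncomputable def toEuc (k : ℕ) (v : Fin k → ℝ) : EuclideanSpace ℝ (Fin k) :=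
  (WithLp.equiv 2 (Fin k → ℝ)).symm v

/-- Coordinatewise shrinkage (soft-thresholding) operator `S_κ` on `ℝⁿ`:
`S_κ(v)_i = sign(v_i) * max (|v_i| - κ) 0`. -/
noncomputable def shrink (n : ℕ) (κ : ℝ) (v : EuclideanSpace ℝ (Fin n)) :
    EuclideanSpace ℝ (Fin n) :=
  WithLp.toLp 2 (fun i => Real.sign (v i) * max (|v i| - κ) 0)

/-- The elastic net objective
`g(x) = (1/2)‖Ax − b‖₂² + μ((1−β)/2 ‖x‖₂² + β‖x‖₁)`. -/
noncomputable def elasticNet (m n : ℕ) (A : Matrix (Fin m) (Fin n) ℝ)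
    (b : EuclideanSpace ℝ (Fin m)) (μ β : ℝ) (x : EuclideanSpace ℝ (Fin n)) : ℝ :=
  (1 / 2) * ‖toEuc m (A.mulVec x) - b‖ ^ 2 +
    μ * ((1 - β) / 2 * ‖x‖ ^ 2 + β * ∑ i, |x i|)

/-- The ISTA fixed-point map `f(x) = S_{αμβ}(x − α(Aᵀ(Ax − b) + μ(1−β)x))` for elastic
net regression. -/
noncomputable def istaMap (m n : ℕ) (A : Matrix (Fin m) (Fin n) ℝ)
    (b : EuclideanSpace ℝ (Fin m)) (μ β α : ℝ) (x : EuclideanSpace ℝ (Fin n)) :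
    EuclideanSpace ℝ (Fin n) :=
  shrink n (α * μ * β)
    (x - α • (toEuc n (Aᵀ.mulVec (toEuc m (A.mulVec x) - b)) + (μ * (1 - β)) • x))

lemma shrink_eq_iff {κ u t : ℝ} (hκ : 0 ≤ κ) :
    Real.sign u * max (|u| - κ) 0 = t ↔
      (t = 0 ∧ |u| ≤ κ) ∨ (t ≠ 0 ∧ u = t + κ * Real.sign t) := by
  rcases le_or_gt (|u|) κ with h | h
  · have h0 : max (|u| - κ) 0 = 0 := max_eq_right (by linarith)
    rw [h0, mul_zero]
    constructor
    · rintro rfl; exact Or.inl ⟨rfl, h⟩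
    · rintro (⟨rfl, -⟩ | ⟨ht, hu⟩)
      · rfl
      · exfalso
        rcases lt_trichotomy t 0 with h1 | h1 | h1
        · rw [Real.sign_of_neg h1] at hu
          rw [hu] at h
          rw [abs_of_neg (by nlinarith)] at h
          nlinarith
        · exact ht h1
        · rw [Real.sign_of_pos h1] at hu
          rw [hu] at h
          rw [abs_of_pos (by nlinarith)] at h
          nlinarith
  · have hu0 : u ≠ 0 := by intro h0; rw [h0, abs_zero] at h; linarith
    have h0 : max (|u| - κ) 0 = |u| - κ := max_eq_left (by linarith)
    rw [h0]
    rcases lt_trichotomy u 0 with h1 | h1 | h1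
    · rw [Real.sign_of_neg h1]; rw [abs_of_neg h1] at h ⊢
      constructor
      · rintro rfl
        refine Or.inr ⟨by nlinarith, ?_⟩
        rw [Real.sign_of_neg (by nlinarith)]
        ring
      · rintro (⟨rfl, h2⟩ | ⟨ht, hu⟩)
        · linarith
        · rcases lt_trichotomy t 0 with h2 | h2 | h2
          · rw [Real.sign_of_neg h2] at hu; rw [hu]; ring
          · exact absurd h2 ht
          · rw [Real.sign_of_pos h2] at hu
            nlinarith
    · exact absurd h1 hu0
    · rw [Real.sign_of_pos h1]; rw [abs_of_pos h1] at h ⊢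
      constructor
      · rintro rfl
        refine Or.inr ⟨by nlinarith, ?_⟩
        rw [Real.sign_of_pos (by nlinarith)]
        ring
      · rintro (⟨rfl, h2⟩ | ⟨ht, hu⟩)
        · linarith
        · rcases lt_trichotomy t 0 with h2 | h2 | h2
          · rw [Real.sign_of_neg h2] at hu
            nlinarith
          · exact absurd h2 ht
          · rw [Real.sign_of_pos h2] at hu; rw [hu]; ring

lemma cond_imp_ineq {K t c : ℝ} (hK : 0 ≤ K)
    (h : (t = 0 ∧ |c| ≤ K) ∨ (t ≠ 0 ∧ c = -(K * Real.sign t))) (y : ℝ) :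
    0 ≤ c * (y - t) + K * (|y| - |t|) := by
  rcases h with ⟨rfl, hc⟩ | ⟨ht, hc⟩
  · simp only [abs_zero, sub_zero]
    nlinarith [neg_abs_le (c * y), abs_mul c y, abs_nonneg y, le_abs_self c,
      mul_le_mul_of_nonneg_right hc (abs_nonneg y)]
  · rcases lt_trichotomy t 0 with h1 | h1 | h1
    · rw [Real.sign_of_neg h1] at hc
      rw [hc, abs_of_neg h1]
      nlinarith [neg_abs_le y]
    · exact absurd h1 ht
    · rw [Real.sign_of_pos h1] at hc
      rw [hc, abs_of_pos h1]
      nlinarith [le_abs_self y]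

lemma cond_of_ineq {K t c : ℝ} (hK : 0 ≤ K)
    (h : ∀ y : ℝ, 0 ≤ c * (y - t) + K * (|y| - |t|)) :
    (t = 0 ∧ |c| ≤ K) ∨ (t ≠ 0 ∧ c = -(K * Real.sign t)) := by
  rcases lt_trichotomy t 0 with h1 | h1 | h1
  · refine Or.inr ⟨ne_of_lt h1, ?_⟩
    rw [Real.sign_of_neg h1]
    have h2 := h (t / 2)
    have h3 := h (3 * t / 2)
    rw [abs_of_neg (by linarith : t / 2 < 0), abs_of_neg h1] at h2
    rw [abs_of_neg (by linarith : 3 * t / 2 < 0), abs_of_neg h1] at h3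
    nlinarith
  · refine Or.inl ⟨h1, ?_⟩
    subst h1
    have h2 := h 1
    have h3 := h (-1)
    simp only [abs_zero, abs_one, abs_neg, sub_zero] at h2 h3
    rw [abs_le]; constructor <;> nlinarith
  · refine Or.inr ⟨(ne_of_gt h1).symm ∘ Eq.symm ∘ id, ?_⟩
    rw [Real.sign_of_pos h1]
    have h2 := h (t / 2)
    have h3 := h (3 * t / 2)
    rw [abs_of_pos (by linarith : (0:ℝ) < t / 2), abs_of_pos h1] at h2
    rw [abs_of_pos (by linarith : (0:ℝ) < 3 * t / 2), abs_of_pos h1] at h3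
    nlinarith

lemma ineq_of_local {K t c D : ℝ} (hK : 0 ≤ K) (hD : 0 ≤ D)
    (h : ∀ s : ℝ, 0 ≤ c * s + D * s ^ 2 + K * (|t + s| - |t|)) (y : ℝ) :
    0 ≤ c * (y - t) + K * (|y| - |t|) := by
  set d := y - t with hd
  set X := c * d + K * (|y| - |t|) with hX
  have key : ∀ ε : ℝ, 0 < ε → ε ≤ 1 → 0 ≤ X + ε * (D * d ^ 2) := by
    intro ε hε hε1
    have h1 := h (ε * d)
    have habs : |t + ε * d| ≤ (1 - ε) * |t| + ε * |y| := by
      have : t + ε * d = (1 - ε) * t + ε * y := by rw [hd]; ring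
      rw [this]
      calc |(1 - ε) * t + ε * y| ≤ |(1 - ε) * t| + |ε * y| := abs_add_le _ _
        _ = (1 - ε) * |t| + ε * |y| := by
            rw [abs_mul, abs_mul, abs_of_nonneg (by linarith : (0:ℝ) ≤ 1 - ε),
              abs_of_nonneg (le_of_lt hε)]
    have h2 : 0 ≤ ε * X + ε ^ 2 * (D * d ^ 2) := by
      have : K * (|t + ε * d| - |t|) ≤ ε * (K * (|y| - |t|)) := by
        have := mul_le_mul_of_nonneg_left habs hK
        nlinarith
      nlinarith
    have h3 : 0 ≤ ε * (X + ε * (D * d ^ 2)) := by nlinarith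
    have h4 : ε * 0 ≤ ε * (X + ε * (D * d ^ 2)) := by rw [mul_zero]; exact h3
    exact le_of_mul_le_mul_left h4 hε
  have : ∀ ε' : ℝ, 0 < ε' → 0 ≤ X + ε' := by
    intro ε' hε'
    obtain ⟨ε, hpos, h1, h2⟩ : ∃ ε : ℝ, 0 < ε ∧ ε ≤ 1 ∧ ε * (D * d ^ 2) ≤ ε' := by
      refine ⟨min 1 (ε' / (D * d ^ 2 + 1)), lt_min one_pos (div_pos hε' (by nlinarith)),
        min_le_left _ _, ?_⟩
      have h3 : min 1 (ε' / (D * d ^ 2 + 1)) ≤ ε' / (D * d ^ 2 + 1) := min_le_right _ _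
      have h4 : min 1 (ε' / (D * d ^ 2 + 1)) * (D * d ^ 2) ≤
          (ε' / (D * d ^ 2 + 1)) * (D * d ^ 2) :=
        mul_le_mul_of_nonneg_right h3 (by positivity)
      have h5 : (ε' / (D * d ^ 2 + 1)) * (D * d ^ 2) ≤ ε' := by
        rw [div_mul_eq_mul_div, div_le_iff₀ (by nlinarith)]
        nlinarith
      linarith
    have := key ε hpos h1
    linarith
  by_contra hc
  push_neg at hc
  have := this (-X / 2) (by linarith)
  linarith

lemma bridge {α μ β t c : ℝ} (hα : 0 < α) (hK : 0 ≤ μ * β) :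
    Real.sign (t - α * c) * max (|t - α * c| - α * μ * β) 0 = t ↔
      (t = 0 ∧ |c| ≤ μ * β) ∨ (t ≠ 0 ∧ c = -(μ * β * Real.sign t)) := by
  rw [shrink_eq_iff (by nlinarith : (0:ℝ) ≤ α * μ * β)]
  apply or_congr
  · apply and_congr_right
    intro h0; subst h0
    rw [zero_sub, abs_neg, abs_mul, abs_of_pos hα]
    constructor
    · intro h; nlinarith
    · intro h; nlinarith
  · apply and_congr_right
    intro ht
    constructor
    · intro h
      have h2 : α * c = α * (-(μ * β * Real.sign t)) := by linear_combination -h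
      exact mul_left_cancel₀ (ne_of_gt hα) h2
    · intro h; rw [h]; ring

lemma normsq {k : ℕ} (x : EuclideanSpace ℝ (Fin k)) : ‖x‖ ^ 2 = ∑ i, (x i) ^ 2 := by
  rw [EuclideanSpace.norm_eq, Real.sq_sqrt (by positivity)]
  simp [Real.norm_eq_abs, sq_abs]

lemma elasticNet_eq (m n : ℕ) (A : Matrix (Fin m) (Fin n) ℝ)
    (b : EuclideanSpace ℝ (Fin m)) (μ β : ℝ) (x : EuclideanSpace ℝ (Fin n)) :
    elasticNet m n A b μ β x =
      (1 / 2) * ∑ j, (A.mulVec x j - b j) ^ 2 +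
        μ * ((1 - β) / 2 * ∑ i, (x i) ^ 2 + β * ∑ i, |x i|) := by
  unfold elasticNet
  rw [normsq, normsq]
  rfl

lemma expand (m n : ℕ) (A : Matrix (Fin m) (Fin n) ℝ) (b : EuclideanSpace ℝ (Fin m))
    (μ β : ℝ) (xstar x : EuclideanSpace ℝ (Fin n)) :
    elasticNet m n A b μ β x = elasticNet m n A b μ β xstar +
      (∑ i, ((Aᵀ.mulVec (fun j => A.mulVec xstar j - b j) i + μ * (1 - β) * xstar i) *
          (x i - xstar i) + μ * β * (|x i| - |xstar i|))) +
      ((1 / 2) * ∑ j, (∑ i, A j i * (x i - xstar i)) ^ 2 +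
        μ * (1 - β) / 2 * ∑ i, (x i - xstar i) ^ 2) := by
  rw [elasticNet_eq, elasticNet_eq]
  have key : ∑ j, (A.mulVec x j - b j) ^ 2 =
      ∑ j, ((A.mulVec xstar j - b j) + ∑ i, A j i * (x i - xstar i)) ^ 2 := by
    apply Finset.sum_congr rfl
    intro j _
    simp only [Matrix.mulVec, dotProduct]
    have : ∑ i, A j i * x i = ∑ i, A j i * xstar i + ∑ i, A j i * (x i - xstar i) := by
      rw [← Finset.sum_add_distrib]
      apply Finset.sum_congr rfl; intro i _; ring
    rw [this]; ring
  have exp1 : ∑ j, ((A.mulVec xstar j - b j) + ∑ i, A j i * (x i - xstar i)) ^ 2 =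
      ∑ j, (A.mulVec xstar j - b j) ^ 2 +
      2 * (∑ j, (A.mulVec xstar j - b j) * ∑ i, A j i * (x i - xstar i)) +
      ∑ j, (∑ i, A j i * (x i - xstar i)) ^ 2 := by
    rw [Finset.mul_sum, ← Finset.sum_add_distrib, ← Finset.sum_add_distrib]
    apply Finset.sum_congr rfl; intro j _; ring
  have swap : ∑ j, (A.mulVec xstar j - b j) * ∑ i, A j i * (x i - xstar i) =
      ∑ i, Aᵀ.mulVec (fun j => A.mulVec xstar j - b j) i * (x i - xstar i) := by
    simp only [Finset.mul_sum]
    rw [Finset.sum_comm]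
    apply Finset.sum_congr rfl; intro i _
    simp only [Matrix.mulVec, dotProduct, Matrix.transpose_apply]
    rw [Finset.sum_mul]
    apply Finset.sum_congr rfl; intro j _; ring
  have h2 : ∑ i, (x i) ^ 2 = ∑ i, (xstar i) ^ 2 + 2 * ∑ i, xstar i * (x i - xstar i) +
      ∑ i, (x i - xstar i) ^ 2 := by
    rw [Finset.mul_sum, ← Finset.sum_add_distrib, ← Finset.sum_add_distrib]
    apply Finset.sum_congr rfl; intro i _; ring
  have h3 : ∑ i, |x i| = ∑ i, |xstar i| + ∑ i, (|x i| - |xstar i|) := by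
    rw [← Finset.sum_add_distrib]
    apply Finset.sum_congr rfl; intro i _; ring
  have h4 : ∑ i, ((Aᵀ.mulVec (fun j => A.mulVec xstar j - b j) i + μ * (1 - β) * xstar i) *
          (x i - xstar i) + μ * β * (|x i| - |xstar i|)) =
      ∑ i, Aᵀ.mulVec (fun j => A.mulVec xstar j - b j) i * (x i - xstar i) +
      μ * (1 - β) * ∑ i, xstar i * (x i - xstar i) +
      μ * β * ∑ i, (|x i| - |xstar i|) := by
    rw [Finset.mul_sum, Finset.mul_sum, ← Finset.sum_add_distrib, ← Finset.sum_add_distrib]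
    apply Finset.sum_congr rfl; intro i _; ring
  rw [key, exp1, swap, h2, h3, h4]
  ring

/-- For `μ > 0`, `β ∈ [0,1]`, `α > 0`, a point `x⋆` is a fixed point of the ISTA map
`f(x) = S_{αμβ}(x − α(Aᵀ(Ax − b) + μ(1−β)x))` if and only if `x⋆` is a global minimizer
of the elastic net objective `g`. -/
theorem istaMap_fixedPoint_iff_minimizer (m n : ℕ) (A : Matrix (Fin m) (Fin n) ℝ)
    (b : EuclideanSpace ℝ (Fin m)) (μ β α : ℝ) (hμ : 0 < μ) (hβ0 : 0 ≤ β) (hβ1 : β ≤ 1)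
    (hα : 0 < α) (xstar : EuclideanSpace ℝ (Fin n)) :
    istaMap m n A b μ β α xstar = xstar ↔
      ∀ x : EuclideanSpace ℝ (Fin n),
        elasticNet m n A b μ β xstar ≤ elasticNet m n A b μ β x := by
  have hK : 0 ≤ μ * β := mul_nonneg hμ.le hβ0
  have hiff : istaMap m n A b μ β α xstar = xstar ↔
      ∀ i, (xstar i = 0 ∧
          |Aᵀ.mulVec (fun j => A.mulVec xstar j - b j) i + μ * (1 - β) * xstar i| ≤ μ * β) ∨
        (xstar i ≠ 0 ∧
          Aᵀ.mulVec (fun j => A.mulVec xstar j - b j) i + μ * (1 - β) * xstar i =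
            -(μ * β * Real.sign (xstar i))) := by
    rw [WithLp.ext_iff, funext_iff]
    apply forall_congr'
    intro i
    have happ : istaMap m n A b μ β α xstar i =
        Real.sign (xstar i - α *
            (Aᵀ.mulVec (fun j => A.mulVec xstar j - b j) i + μ * (1 - β) * xstar i)) *
          max (|xstar i - α *
            (Aᵀ.mulVec (fun j => A.mulVec xstar j - b j) i + μ * (1 - β) * xstar i)| -
            α * μ * β) 0 := rfl
    rw [happ]
    exact bridge hα hK
  rw [hiff]
  constructor
  · intro hcond x
    rw [expand m n A b μ β xstar x]
    have hM : 0 ≤ ∑ i, ((Aᵀ.mulVec (fun j => A.mulVec xstar j - b j) i +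
        μ * (1 - β) * xstar i) * (x i - xstar i) + μ * β * (|x i| - |xstar i|)) :=
      Finset.sum_nonneg fun i _ => cond_imp_ineq hK (hcond i) (x i)
    have hQ : 0 ≤ (1 / 2) * ∑ j, (∑ i, A j i * (x i - xstar i)) ^ 2 +
        μ * (1 - β) / 2 * ∑ i, (x i - xstar i) ^ 2 := by
      have hμβ : 0 ≤ μ * (1 - β) := mul_nonneg hμ.le (by linarith)
      have s1 : (0:ℝ) ≤ ∑ j, (∑ i, A j i * (x i - xstar i)) ^ 2 :=
        Finset.sum_nonneg fun j _ => sq_nonneg _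
      have s2 : (0:ℝ) ≤ ∑ i, (x i - xstar i) ^ 2 :=
        Finset.sum_nonneg fun i _ => sq_nonneg _
      nlinarith
    linarith
  · intro hmin i
    apply cond_of_ineq hK
    apply ineq_of_local hK
      (show (0:ℝ) ≤ (1 / 2) * ∑ j, (A j i) ^ 2 + μ * (1 - β) / 2 by
        have hμβ : 0 ≤ μ * (1 - β) := mul_nonneg hμ.le (by linarith)
        have s1 : (0:ℝ) ≤ ∑ j, (A j i) ^ 2 := Finset.sum_nonneg fun j _ => sq_nonneg _
        nlinarith)
    intro s
    have h := hmin (toEuc n (fun j => xstar j + if j = i then s else 0))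
    rw [expand m n A b μ β xstar (toEuc n (fun j => xstar j + if j = i then s else 0))] at h
    simp only [toEuc, WithLp.equiv_symm_apply, WithLp.ofLp_toLp] at h
    have hd : ∀ j : Fin n, (xstar j + (if j = i then s else 0)) - xstar j =
        if j = i then s else 0 := fun j => add_sub_cancel_left _ _
    simp only [hd] at h
    have hM : ∑ i', ((Aᵀ.mulVec (fun j => A.mulVec xstar j - b j) i' +
          μ * (1 - β) * xstar i') * (if i' = i then s else 0) +
          μ * β * (|xstar i' + if i' = i then s else 0| - |xstar i'|)) =
        (Aᵀ.mulVec (fun j => A.mulVec xstar j - b j) i + μ * (1 - β) * xstar i) * s +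
          μ * β * (|xstar i + s| - |xstar i|) := by
      rw [Finset.sum_eq_single i]
      · simp
      · intro j _ hj; simp [hj]
      · simp
    have hQ1 : ∀ j' : Fin m, ∑ j, A j' j * (if j = i then s else 0) = A j' i * s := by
      intro j'
      simp [mul_ite, mul_zero, Finset.sum_ite_eq']
    have hQ2 : ∑ j : Fin n, (if j = i then s else 0) ^ 2 = s ^ 2 := by
      simp [ite_pow, Finset.sum_ite_eq']
    simp only [hQ1, hQ2] at h
    rw [hM] at h
    have hQ3 : ∑ j', (A j' i * s) ^ 2 = (∑ j', (A j' i) ^ 2) * s ^ 2 := by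
      rw [Finset.sum_mul]
      apply Finset.sum_congr rfl; intro j _; ring
    rw [hQ3] at h
    nlinarith [h]
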